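/- (Invariance of G under state-space reparametrization) Suppose the true model M*, estimated model M, and policy π are deterministic, and let G(s,a) = |V^{π,M}(M(s,a)) − V^{π,M}(M*(s,a))|. For any bijection 𝒯 of the state space, let M^𝒯(s,a) = 𝒯 M(𝒯⁻¹ s, a), M^{*,𝒯}(s,a) = 𝒯 M*(𝒯⁻¹ s, a), π^𝒯(s) = π(𝒯⁻¹ s), R^𝒯(s,a) = R(𝒯⁻¹ s, a), and G^𝒯(s′, a) = |V^{π^𝒯, M^𝒯}(M^𝒯(s′, a)) − V^{π^𝒯, M^𝒯}(M^{*,𝒯}(s′, a))| (value computed with reward R^𝒯). Then G^𝒯(𝒯 s, a) = G(s, a) for all s, a. -/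
import Mathlib


/-!
STATEMENT 7 (Invariance of `G` under state-space reparametrization).
With `G(s,a) = |V^{π,M}(M(s,a)) − V^{π,M}(M*(s,a))|` for deterministic
`M`, `M*`, `π`, and a bijection `𝒯` of the state space, the transformed
quantity satisfies `G^𝒯(𝒯 s, a) = G(s, a)` for all `s`, `a`.
-/

noncomputable section

/-- Deterministic trajectory: `s₀ = s`, `s_{t+1} = M(s_t, π(s_t))`. -/
def traj {S A : Type*} (π : S → A) (M : S × A → S) (s : S) : ℕ → S
  | 0 => s
  | t + 1 => M (traj π M s t, π (traj π M s t))

/-- Value of a deterministic policy and model: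
`V^{π,M}(s) = Σ_{t≥0} γ^t R(s_t, π(s_t))`. -/
def detValue {S A : Type*} (π : S → A) (M : S × A → S) (R : S × A → ℝ) (γ : ℝ)
    (s : S) : ℝ :=
  ∑' t : ℕ, γ ^ t * R (traj π M s t, π (traj π M s t))

/-- `G(s,a) = |V^{π,M}(M(s,a)) − V^{π,M}(M*(s,a))|`. -/
def Gdet {S A : Type*} (π : S → A) (M Mstar : S × A → S) (R : S × A → ℝ) (γ : ℝ)
    (s : S) (a : A) : ℝ :=
  |detValue π M R γ (M (s, a)) - detValue π M R γ (Mstar (s, a))|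

lemma traj_reparam {S S' A : Type*} (𝒯 : S ≃ S') (π : S → A) (M : S × A → S)
    (s : S) (t : ℕ) :
    traj (fun s' => π (𝒯.symm s')) (fun p => 𝒯 (M (𝒯.symm p.1, p.2))) (𝒯 s) t
      = 𝒯 (traj π M s t) := by
  induction t with
  | zero => rfl
  | succ t ih => simp [traj, ih]

lemma detValue_reparam {S S' A : Type*} (𝒯 : S ≃ S') (π : S → A) (M : S × A → S)
    (R : S × A → ℝ) (γ : ℝ) (s : S) :
    detValue (fun s' => π (𝒯.symm s')) (fun p => 𝒯 (M (𝒯.symm p.1, p.2)))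
        (fun p => R (𝒯.symm p.1, p.2)) γ (𝒯 s)
      = detValue π M R γ s := by
  unfold detValue
  congr 1
  ext t
  simp [traj_reparam]

theorem G_invariant_under_reparametrization
    {S S' A : Type*} (𝒯 : S ≃ S')
    (π : S → A) (M Mstar : S × A → S) (R : S × A → ℝ)
    (C : ℝ) (hRbdd : ∀ x, |R x| ≤ C)
    (γ : ℝ) (hγ0 : 0 ≤ γ) (hγ1 : γ < 1) (s : S) (a : A) :
    Gdet (fun s' => π (𝒯.symm s'))
        (fun p => 𝒯 (M (𝒯.symm p.1, p.2)))
        (fun p => 𝒯 (Mstar (𝒯.symm p.1, p.2)))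
        (fun p => R (𝒯.symm p.1, p.2)) γ (𝒯 s) a
      = Gdet π M Mstar R γ s a := by
  unfold Gdet
  have h1 := detValue_reparam 𝒯 π M R γ (M (s, a))
  have h2 := detValue_reparam 𝒯 π M R γ (Mstar (s, a))
  simp only [Equiv.symm_apply_apply] at *
  rw [h1, h2]

end
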